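/- The expected value of the scaled perimeter satisfies E[P_m] = 4p(m − (m−1)p). -/

import Mathlib

open MeasureTheory ProbabilityTheory Finset Filter

noncomputable section

/-- The scaled total area `A_{m} = (1/m) ∑_{i,j=1}^m Z_{i,j}` of a binary image `Z`. -/
def areaSum (m : ℕ) (Z : ℕ → ℕ → ℝ) : ℝ :=
  (1 / (m : ℝ)) * ∑ i ∈ Finset.Icc 1 m, ∑ j ∈ Finset.Icc 1 m, Z i j

/-- The scaled perimeter `P_{m} = (1/m) ∑_{i,j=1}^m ψ(i,j)` of a binary image `Z`,
where `ψ(i,j) = 0` if `Z i j = 0` and `ψ(i,j) = 4 - (Z (i-1) j + Z (i+1) j + Z i (j-1) + Z i (j+1))`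
if `Z i j = 1`. -/
def perimSum (m : ℕ) (Z : ℕ → ℕ → ℝ) : ℝ :=
  (1 / (m : ℝ)) * ∑ i ∈ Finset.Icc 1 m, ∑ j ∈ Finset.Icc 1 m,
    (if Z i j = 1 then 4 - (Z (i - 1) j + Z (i + 1) j + Z i (j - 1) + Z i (j + 1)) else 0)

/-- The scaled Euler characteristic `χ_{m} = (1/m) ∑_{i,j=1}^m W_{i,j}` of a binary image `Z`,
where, with `S = Z i j + Z (i+1) j + Z i (j+1) + Z (i+1) (j+1)`: `W = 1/4` if `S = 1`;
`W = -1/4` if `S = 3`; `W = -1/2` if `S = 2` and one of the two diagonal products is `1`;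
and `W = 0` otherwise. -/
def eulerSum (m : ℕ) (Z : ℕ → ℕ → ℝ) : ℝ :=
  (1 / (m : ℝ)) * ∑ i ∈ Finset.Icc 1 m, ∑ j ∈ Finset.Icc 1 m,
    (if Z i j + Z (i + 1) j + Z i (j + 1) + Z (i + 1) (j + 1) = 1 then (1 / 4 : ℝ)
      else if Z i j + Z (i + 1) j + Z i (j + 1) + Z (i + 1) (j + 1) = 3 then -(1 / 4)
      else if Z i j + Z (i + 1) j + Z i (j + 1) + Z (i + 1) (j + 1) = 2 ∧
          (Z i j * Z (i + 1) (j + 1) = 1 ∨ Z (i + 1) j * Z i (j + 1) = 1) then -(1 / 2)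
      else 0)

section Helpers
variable {Ω : Type*} [MeasureSpace Ω] [IsProbabilityMeasure (ℙ : Measure Ω)]

lemma indicator_ae_of01 {X : Ω → ℝ} (h : ∀ᵐ ω ∂ℙ, X ω = 0 ∨ X ω = 1) :
    X =ᵐ[ℙ] Set.indicator {ω | X ω = 1} 1 := by
  filter_upwards [h] with ω hω
  rcases hω with h0 | h1
  · have hmem : ω ∉ {ω | X ω = 1} := by simp [h0]
    simp [Set.indicator_of_notMem hmem, h0]
  · have hmem : ω ∈ {ω | X ω = 1} := h1
    simp [Set.indicator_of_mem hmem, h1]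

lemma integrable_of01 {X : Ω → ℝ} (hX : Measurable X)
    (h : ∀ᵐ ω ∂ℙ, X ω = 0 ∨ X ω = 1) : Integrable X ℙ :=
  ((integrable_const (1:ℝ)).indicator (hX (measurableSet_singleton 1))).congr
    (indicator_ae_of01 h).symm

lemma integral_of01 {X : Ω → ℝ} (hX : Measurable X)
    (h : ∀ᵐ ω ∂ℙ, X ω = 0 ∨ X ω = 1) :
    ∫ ω, X ω ∂ℙ = (ℙ {ω | X ω = 1}).toReal := by
  rw [integral_congr_ae (indicator_ae_of01 h)]
  exact integral_indicator_one (hX (measurableSet_singleton 1))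

lemma prod_ae_of01 {X Y : Ω → ℝ} (hX01 : ∀ᵐ ω ∂ℙ, X ω = 0 ∨ X ω = 1)
    (hY01 : ∀ᵐ ω ∂ℙ, Y ω = 0 ∨ Y ω = 1) :
    (fun ω => X ω * Y ω) =ᵐ[ℙ] Set.indicator ({ω | X ω = 1} ∩ {ω | Y ω = 1}) 1 := by
  filter_upwards [hX01, hY01] with ω hX hY
  by_cases hx : X ω = 1
  · by_cases hy : Y ω = 1
    · have hmem : ω ∈ {ω | X ω = 1} ∩ {ω | Y ω = 1} := ⟨hx, hy⟩
      simp [Set.indicator_of_mem hmem, hx, hy]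
    · have hy0 : Y ω = 0 := hY.resolve_right hy
      have hmem : ω ∉ {ω | X ω = 1} ∩ {ω | Y ω = 1} := fun h => hy h.2
      simp [Set.indicator_of_notMem hmem, hy0]
  · have hx0 : X ω = 0 := hX.resolve_right hx
    have hmem : ω ∉ {ω | X ω = 1} ∩ {ω | Y ω = 1} := fun h => hx h.1
    simp [Set.indicator_of_notMem hmem, hx0]

lemma integrable_mul01 {X Y : Ω → ℝ} (hXm : Measurable X) (hYm : Measurable Y)
    (hX01 : ∀ᵐ ω ∂ℙ, X ω = 0 ∨ X ω = 1) (hY01 : ∀ᵐ ω ∂ℙ, Y ω = 0 ∨ Y ω = 1) :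
    Integrable (fun ω => X ω * Y ω) ℙ :=
  ((integrable_const (1:ℝ)).indicator
      ((hXm (measurableSet_singleton 1)).inter (hYm (measurableSet_singleton 1)))).congr
    (prod_ae_of01 hX01 hY01).symm

lemma integral_mul01 {X Y : Ω → ℝ} (hXm : Measurable X) (hYm : Measurable Y)
    (hX01 : ∀ᵐ ω ∂ℙ, X ω = 0 ∨ X ω = 1) (hY01 : ∀ᵐ ω ∂ℙ, Y ω = 0 ∨ Y ω = 1)
    (hXY : IndepFun X Y ℙ) :
    ∫ ω, X ω * Y ω ∂ℙ = (ℙ {ω | X ω = 1}).toReal * (ℙ {ω | Y ω = 1}).toReal := by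
  have h := hXY.measure_inter_preimage_eq_mul {1} {1} (measurableSet_singleton 1)
    (measurableSet_singleton 1)
  rw [integral_congr_ae (prod_ae_of01 hX01 hY01)]
  show ∫ a, (X ⁻¹' {1} ∩ Y ⁻¹' {1}).indicator 1 a ∂ℙ = _
  rw [integral_indicator_one ((hXm (measurableSet_singleton 1)).inter
      (hYm (measurableSet_singleton 1))), measureReal_def, h, ENNReal.toReal_mul]
  rfl

end Helpers

/-- Under CSR helper-proved theorem. -/
theorem expectation_perimeter
    {Ω : Type*} [MeasureSpace Ω] [IsProbabilityMeasure (ℙ : Measure Ω)]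
    (m : ℕ) (hm : 3 ≤ m) (p : ℝ) (hp0 : 0 ≤ p) (hp1 : p ≤ 1)
    (Z : ℕ → ℕ → Ω → ℝ)
    (hmeas : ∀ i j, Measurable (Z i j))
    (hzero : ∀ i j, (i = 0 ∨ i = m + 1 ∨ j = 0 ∨ j = m + 1) → ∀ ω, Z i j ω = 0)
    (hone : ∀ i ∈ Finset.Icc 1 m, ∀ j ∈ Finset.Icc 1 m,
      ℙ {ω | Z i j ω = 1} = ENNReal.ofReal p)
    (hzeroP : ∀ i ∈ Finset.Icc 1 m, ∀ j ∈ Finset.Icc 1 m,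
      ℙ {ω | Z i j ω = 0} = ENNReal.ofReal (1 - p))
    (hind : iIndepFun
      (fun q : (Finset.Icc 1 m ×ˢ Finset.Icc 1 m : Finset (ℕ × ℕ)) => Z q.1.1 q.1.2) ℙ) :
    ∫ ω, perimSum m (fun i j => Z i j ω) ∂ℙ =
      4 * p * ((m : ℝ) - ((m : ℝ) - 1) * p) := by
  classical
  have h01 : ∀ i ∈ Finset.Icc 1 m, ∀ j ∈ Finset.Icc 1 m,
      ∀ᵐ ω ∂ℙ, Z i j ω = 0 ∨ Z i j ω = 1 := by
    intro i hi j hj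
    have hm1 : MeasurableSet {ω | Z i j ω = 1} := hmeas i j (measurableSet_singleton 1)
    have hm0' : MeasurableSet {ω | Z i j ω = 0} := hmeas i j (measurableSet_singleton 0)
    have hd : Disjoint {ω | Z i j ω = 0} {ω | Z i j ω = 1} := by
      rw [Set.disjoint_left]
      intro ω h0 h1
      simp only [Set.mem_setOf_eq] at h0 h1
      rw [h0] at h1; norm_num at h1
    have hu : ℙ ({ω | Z i j ω = 0} ∪ {ω | Z i j ω = 1}) = 1 := by
      rw [measure_union hd hm1, hzeroP i hi j hj, hone i hi j hj,
        ← ENNReal.ofReal_add (by linarith) hp0]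
      norm_num
    have hc : ℙ ({ω | Z i j ω = 0} ∪ {ω | Z i j ω = 1})ᶜ = 0 := by
      rw [measure_compl (hm0'.union hm1) (measure_ne_top _ _), hu, measure_univ]
      simp
    have hset : {ω | ¬(Z i j ω = 0 ∨ Z i j ω = 1)} =
        ({ω | Z i j ω = 0} ∪ {ω | Z i j ω = 1})ᶜ := by
      ext ω; simp [not_or]
    rw [ae_iff, hset]
    exact hc
  have hptoReal : ∀ i ∈ Finset.Icc 1 m, ∀ j ∈ Finset.Icc 1 m,
      (ℙ {ω | Z i j ω = 1}).toReal = p := by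
    intro i hi j hj; rw [hone i hi j hj, ENNReal.toReal_ofReal hp0]
  have hprod : ∀ i ∈ Finset.Icc 1 m, ∀ j ∈ Finset.Icc 1 m, ∀ k ∈ Finset.Icc 1 m,
      ∀ l ∈ Finset.Icc 1 m, (i, j) ≠ (k, l) →
      ∫ ω, Z i j ω * Z k l ω ∂ℙ = p ^ 2 := by
    intro i hi j hj k hk l hl hne
    have hIF : IndepFun (Z i j) (Z k l) ℙ := by
      have h := hind.indepFun
        (i := (⟨(i, j), Finset.mem_product.mpr ⟨hi, hj⟩⟩ :
          (Finset.Icc 1 m ×ˢ Finset.Icc 1 m : Finset (ℕ × ℕ))))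
        (j := ⟨(k, l), Finset.mem_product.mpr ⟨hk, hl⟩⟩)
        (by simpa using hne)
      exact h
    rw [integral_mul01 (hmeas i j) (hmeas k l) (h01 i hi j hj) (h01 k hk l hl) hIF,
      hptoReal i hi j hj, hptoReal k hk l hl]
    ring
  have key : ∀ i ∈ Finset.Icc 1 m, ∀ j ∈ Finset.Icc 1 m,
      Integrable (fun ω => if Z i j ω = 1 then
        4 - (Z (i - 1) j ω + Z (i + 1) j ω + Z i (j - 1) ω + Z i (j + 1) ω) else 0) ℙ ∧
      ∫ ω, (if Z i j ω = 1 then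
        4 - (Z (i - 1) j ω + Z (i + 1) j ω + Z i (j - 1) ω + Z i (j + 1) ω) else 0) ∂ℙ
        = 4 * p - p ^ 2 * ((if 2 ≤ i then (1:ℝ) else 0) + (if i < m then 1 else 0)
          + (if 2 ≤ j then 1 else 0) + (if j < m then 1 else 0)) := by
    intro i hi j hj
    have hib := Finset.mem_Icc.mp hi
    have hjb := Finset.mem_Icc.mp hj
    have hL : Integrable (fun ω => Z i j ω * Z (i - 1) j ω) ℙ ∧
        ∫ ω, Z i j ω * Z (i - 1) j ω ∂ℙ = p ^ 2 * (if 2 ≤ i then (1:ℝ) else 0) := by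
      by_cases h2 : 2 ≤ i
      · have hmem : (i - 1) ∈ Finset.Icc 1 m := by rw [Finset.mem_Icc]; omega
        have hne : (i, j) ≠ (i - 1, j) := by
          simp only [ne_eq, Prod.mk.injEq, not_and]; intro h _; omega
        refine ⟨integrable_mul01 (hmeas i j) (hmeas (i - 1) j) (h01 i hi j hj)
          (h01 (i - 1) hmem j hj), ?_⟩
        rw [hprod i hi j hj (i - 1) hmem j hj hne, if_pos h2, mul_one]
      · have hi1 : i - 1 = 0 := by omega
        have hzf : (fun ω => Z i j ω * Z (i - 1) j ω) = fun _ => (0:ℝ) := by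
          funext ω; rw [hi1, hzero 0 j (Or.inl rfl) ω, mul_zero]
        refine ⟨by rw [hzf]; exact integrable_const 0, ?_⟩
        rw [hzf, if_neg h2, mul_zero]; simp
    have hR : Integrable (fun ω => Z i j ω * Z (i + 1) j ω) ℙ ∧
        ∫ ω, Z i j ω * Z (i + 1) j ω ∂ℙ = p ^ 2 * (if i < m then (1:ℝ) else 0) := by
      by_cases h2 : i < m
      · have hmem : (i + 1) ∈ Finset.Icc 1 m := by rw [Finset.mem_Icc]; omega
        have hne : (i, j) ≠ (i + 1, j) := by
          simp only [ne_eq, Prod.mk.injEq, not_and]; intro h _; omega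
        refine ⟨integrable_mul01 (hmeas i j) (hmeas (i + 1) j) (h01 i hi j hj)
          (h01 (i + 1) hmem j hj), ?_⟩
        rw [hprod i hi j hj (i + 1) hmem j hj hne, if_pos h2, mul_one]
      · have hi1 : i + 1 = m + 1 := by omega
        have hzf : (fun ω => Z i j ω * Z (i + 1) j ω) = fun _ => (0:ℝ) := by
          funext ω; rw [hi1, hzero (m + 1) j (Or.inr (Or.inl rfl)) ω, mul_zero]
        refine ⟨by rw [hzf]; exact integrable_const 0, ?_⟩
        rw [hzf, if_neg h2, mul_zero]; simp
    have hD : Integrable (fun ω => Z i j ω * Z i (j - 1) ω) ℙ ∧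
        ∫ ω, Z i j ω * Z i (j - 1) ω ∂ℙ = p ^ 2 * (if 2 ≤ j then (1:ℝ) else 0) := by
      by_cases h2 : 2 ≤ j
      · have hmem : (j - 1) ∈ Finset.Icc 1 m := by rw [Finset.mem_Icc]; omega
        have hne : (i, j) ≠ (i, j - 1) := by
          simp only [ne_eq, Prod.mk.injEq, not_and]; intro _ ; omega
        refine ⟨integrable_mul01 (hmeas i j) (hmeas i (j - 1)) (h01 i hi j hj)
          (h01 i hi (j - 1) hmem), ?_⟩
        rw [hprod i hi j hj i hi (j - 1) hmem hne, if_pos h2, mul_one]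
      · have hj1 : j - 1 = 0 := by omega
        have hzf : (fun ω => Z i j ω * Z i (j - 1) ω) = fun _ => (0:ℝ) := by
          funext ω; rw [hj1, hzero i 0 (Or.inr (Or.inr (Or.inl rfl))) ω, mul_zero]
        refine ⟨by rw [hzf]; exact integrable_const 0, ?_⟩
        rw [hzf, if_neg h2, mul_zero]; simp
    have hU : Integrable (fun ω => Z i j ω * Z i (j + 1) ω) ℙ ∧
        ∫ ω, Z i j ω * Z i (j + 1) ω ∂ℙ = p ^ 2 * (if j < m then (1:ℝ) else 0) := by
      by_cases h2 : j < m
      · have hmem : (j + 1) ∈ Finset.Icc 1 m := by rw [Finset.mem_Icc]; omega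
        have hne : (i, j) ≠ (i, j + 1) := by
          simp only [ne_eq, Prod.mk.injEq, not_and]; intro _ ; omega
        refine ⟨integrable_mul01 (hmeas i j) (hmeas i (j + 1)) (h01 i hi j hj)
          (h01 i hi (j + 1) hmem), ?_⟩
        rw [hprod i hi j hj i hi (j + 1) hmem hne, if_pos h2, mul_one]
      · have hj1 : j + 1 = m + 1 := by omega
        have hzf : (fun ω => Z i j ω * Z i (j + 1) ω) = fun _ => (0:ℝ) := by
          funext ω; rw [hj1, hzero i (m + 1) (Or.inr (Or.inr (Or.inr rfl))) ω, mul_zero]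
        refine ⟨by rw [hzf]; exact integrable_const 0, ?_⟩
        rw [hzf, if_neg h2, mul_zero]; simp
    have hZint : Integrable (Z i j) ℙ := integrable_of01 (hmeas i j) (h01 i hi j hj)
    have hZval : ∫ ω, Z i j ω ∂ℙ = p := by
      rw [integral_of01 (hmeas i j) (h01 i hi j hj)]; exact hptoReal i hi j hj
    have hae : (fun ω => if Z i j ω = 1 then
          4 - (Z (i - 1) j ω + Z (i + 1) j ω + Z i (j - 1) ω + Z i (j + 1) ω) else 0)
        =ᵐ[ℙ] fun ω => 4 * Z i j ω - (Z i j ω * Z (i - 1) j ω + Z i j ω * Z (i + 1) j ω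
          + Z i j ω * Z i (j - 1) ω + Z i j ω * Z i (j + 1) ω) := by
      filter_upwards [h01 i hi j hj] with ω hω
      rcases hω with h0 | h1
      · rw [if_neg (by rw [h0]; norm_num), h0]; ring
      · rw [if_pos h1, h1]; ring
    have hI2 : Integrable (fun ω => Z i j ω * Z (i - 1) j ω
        + Z i j ω * Z (i + 1) j ω) ℙ := hL.1.add hR.1
    have hI3 : Integrable (fun ω => Z i j ω * Z (i - 1) j ω
        + Z i j ω * Z (i + 1) j ω + Z i j ω * Z i (j - 1) ω) ℙ := hI2.add hD.1
    have hI4 : Integrable (fun ω => Z i j ω * Z (i - 1) j ω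
        + Z i j ω * Z (i + 1) j ω + Z i j ω * Z i (j - 1) ω
        + Z i j ω * Z i (j + 1) ω) ℙ := hI3.add hU.1
    have hint2 : Integrable (fun ω => 4 * Z i j ω - (Z i j ω * Z (i - 1) j ω
        + Z i j ω * Z (i + 1) j ω + Z i j ω * Z i (j - 1) ω + Z i j ω * Z i (j + 1) ω)) ℙ :=
      (hZint.const_mul 4).sub hI4
    refine ⟨hint2.congr hae.symm, ?_⟩
    rw [integral_congr_ae hae,
      integral_sub (hZint.const_mul 4) hI4,
      integral_add hI3 hU.1, integral_add hI2 hD.1,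
      integral_add hL.1 hR.1, integral_const_mul, hZval, hL.2, hR.2, hD.2, hU.2]
    ring
  -- main computation
  have hcard : (Finset.Icc 1 m).card = m := by rw [Nat.card_Icc]; omega
  have s1 : ∑ i ∈ Finset.Icc 1 m, (if 2 ≤ i then (1:ℝ) else 0) = (m:ℝ) - 1 := by
    rw [Finset.sum_boole]
    have hf : (Finset.Icc 1 m).filter (fun i => 2 ≤ i) = Finset.Icc 2 m := by
      ext x; simp only [Finset.mem_filter, Finset.mem_Icc]; omega
    rw [hf, Nat.card_Icc]
    have h' : m + 1 - 2 = m - 1 := by omega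
    rw [h', Nat.cast_sub (by omega)]; simp
  have s2 : ∑ i ∈ Finset.Icc 1 m, (if i < m then (1:ℝ) else 0) = (m:ℝ) - 1 := by
    rw [Finset.sum_boole]
    have hf : (Finset.Icc 1 m).filter (fun i => i < m) = Finset.Icc 1 (m - 1) := by
      ext x; simp only [Finset.mem_filter, Finset.mem_Icc]; omega
    rw [hf, Nat.card_Icc]
    have h' : m - 1 + 1 - 1 = m - 1 := by omega
    rw [h', Nat.cast_sub (by omega)]; simp
  simp only [perimSum]
  rw [integral_const_mul,
    integral_finset_sum _ (fun i hi => integrable_finset_sum _ (fun j hj => (key i hi j hj).1))]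
  have hrw : ∀ i ∈ Finset.Icc 1 m,
      ∫ ω, ∑ j ∈ Finset.Icc 1 m, (if Z i j ω = 1 then
        4 - (Z (i - 1) j ω + Z (i + 1) j ω + Z i (j - 1) ω + Z i (j + 1) ω) else 0) ∂ℙ
      = ∑ j ∈ Finset.Icc 1 m, (4 * p - p ^ 2 * ((if 2 ≤ i then (1:ℝ) else 0)
        + (if i < m then 1 else 0) + (if 2 ≤ j then 1 else 0) + (if j < m then 1 else 0))) := by
    intro i hi
    rw [integral_finset_sum _ (fun j hj => (key i hi j hj).1)]
    exact Finset.sum_congr rfl (fun j hj => (key i hi j hj).2)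
  rw [Finset.sum_congr rfl hrw]
  have sinner : ∀ x : ℕ, ∑ x1 ∈ Finset.Icc 1 m,
      (4 * p - p ^ 2 * ((if 2 ≤ x then (1:ℝ) else 0) + (if x < m then 1 else 0)
        + (if 2 ≤ x1 then 1 else 0) + (if x1 < m then 1 else 0)))
      = (m:ℝ) * (4 * p) - p ^ 2 * ((m:ℝ) * ((if 2 ≤ x then (1:ℝ) else 0)
        + (if x < m then 1 else 0)) + ((m:ℝ) - 1) + ((m:ℝ) - 1)) := by
    intro x
    rw [Finset.sum_sub_distrib, Finset.sum_const, hcard, nsmul_eq_mul, ← Finset.mul_sum]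
    congr 1
    rw [Finset.sum_add_distrib, Finset.sum_add_distrib, Finset.sum_add_distrib,
      Finset.sum_const, hcard, nsmul_eq_mul, s1, s2, Finset.sum_const, hcard, nsmul_eq_mul]
    ring
  have hsum : ∑ i ∈ Finset.Icc 1 m, ∑ j ∈ Finset.Icc 1 m,
      (4 * p - p ^ 2 * ((if 2 ≤ i then (1:ℝ) else 0) + (if i < m then 1 else 0)
        + (if 2 ≤ j then 1 else 0) + (if j < m then 1 else 0)))
      = (m:ℝ) * ((m:ℝ) * (4 * p)) - p ^ 2 * (4 * (m:ℝ) * ((m:ℝ) - 1)) := by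
    rw [Finset.sum_congr rfl (fun x _ => sinner x), Finset.sum_sub_distrib,
      Finset.sum_const, hcard, nsmul_eq_mul, ← Finset.mul_sum]
    congr 1
    rw [Finset.sum_add_distrib, Finset.sum_add_distrib, ← Finset.mul_sum,
      Finset.sum_add_distrib, s1, s2, Finset.sum_const, hcard, nsmul_eq_mul]
    ring
  rw [hsum]
  have hmne : (m:ℝ) ≠ 0 := by
    have : (0:ℝ) < m := by exact_mod_cast Nat.lt_of_lt_of_le (by norm_num) hm
    linarith
  field_simp
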